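/- If a pure shellable simplicial complex Δ has the property that every codimension-1 face is contained in exactly one or two facets, and some codimension-1 face is contained in exactly one facet, then the reduced Euler characteristic of Δ is 0 if dim Δ ≥ 0 (that is, Δ is not a homology sphere: it has the homology of a point). -/

import Mathlib

open scoped Classical

set_option linter.unusedSectionVars false

namespace Stmt18Aux

variable {V : Type*} [DecidableEq V] {N : ℕ}

def SOld (F : Fin N → Finset V) (k : ℕ) (σ : Finset V) : Prop :=
  ∃ i : Fin N, (i : ℕ) < k ∧ σ ⊆ F i

noncomputable def SR (F : Fin N → Finset V) (j : Fin N) : Finset V :=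
  (F j).filter fun v => SOld F (j : ℕ) ((F j).erase v)

theorem SOld.mono {F : Fin N → Finset V} {k : ℕ} {σ τ : Finset V}
    (h : SOld F k σ) (hτ : τ ⊆ σ) : SOld F k τ := by
  obtain ⟨i, hi, hs⟩ := h; exact ⟨i, hi, hτ.trans hs⟩

theorem SR_subset (F : Fin N → Finset V) (j : Fin N) : SR F j ⊆ F j :=
  Finset.filter_subset _ _

theorem eq_erase {d : ℕ} {S G : Finset V} (hS : S.card = d + 1) (hG : G ⊆ S)
    (hGc : G.card = d) : ∃ v ∈ S, v ∉ G ∧ G = S.erase v := by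
  have h1 : (S \ G).card = 1 := by
    rw [Finset.card_sdiff_of_subset hG, hS, hGc]; omega
  obtain ⟨v, hv⟩ := Finset.card_eq_one.mp h1
  have hvS : v ∈ S \ G := hv ▸ Finset.mem_singleton_self v
  refine ⟨v, (Finset.mem_sdiff.mp hvS).1, (Finset.mem_sdiff.mp hvS).2, ?_⟩
  have := Finset.sdiff_sdiff_eq_self hG
  rw [hv] at this
  rw [← this, Finset.sdiff_singleton_eq_erase]

variable {F : Fin N → Finset V} {d : ℕ}

/-- interval characterization of new faces -/
theorem old_iff (hcardF : ∀ j, (F j).card = d + 1)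
    (hshell : ∀ j : Fin N, 0 < (j : ℕ) → ∀ G : Finset V,
      G ⊆ F j → (∃ i, i < j ∧ G ⊆ F i) →
      ∃ G', G' ⊆ F j ∧ (∃ i, i < j ∧ G' ⊆ F i) ∧ G ⊆ G' ∧ G'.card = d)
    (j : Fin N) {σ : Finset V} (hσ : σ ⊆ F j) :
    SOld F (j : ℕ) σ ↔ ¬ SR F j ⊆ σ := by
  constructor
  · intro hold
    have hj : 0 < (j : ℕ) := by
      obtain ⟨i, hi, -⟩ := hold
      omega
    obtain ⟨G', hG'F, hG'old, hσG', hG'c⟩ := hshell j hj σ hσ hold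
    obtain ⟨v, hvF, hvG', hveq⟩ := eq_erase (hcardF j) hG'F hG'c
    have hvR : v ∈ SR F j := by
      rw [SR, Finset.mem_filter]
      exact ⟨hvF, hveq ▸ hG'old⟩
    intro hRσ
    exact hvG' (hveq ▸ hσG' (hRσ hvR))
  · intro h
    obtain ⟨v, hvR, hvσ⟩ := Finset.not_subset.mp h
    rw [SR, Finset.mem_filter] at hvR
    exact hvR.2.mono (Finset.subset_erase.mpr ⟨hσ, hvσ⟩)



noncomputable def RG (F : Fin N → Finset V) (d : ℕ) : Finset (Finset V) :=
  (Finset.univ.biUnion fun i => (F i).powerset).filter fun G => G.card = d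

theorem mem_RG {F : Fin N → Finset V} {d : ℕ} {G : Finset V} :
    G ∈ RG F d ↔ (∃ i, G ⊆ F i) ∧ G.card = d := by
  simp [RG]

variable {F : Fin N → Finset V} {d : ℕ}

theorem pair_card (hcardF : ∀ j, (F j).card = d + 1) (j : Fin N) {τ : Finset V}
    (hτ : τ ⊆ F j) (hτc : τ.card + 1 = d) :
    ((F j).powerset.filter fun G => G.card = d ∧ τ ⊆ G).card = 2 := by
  have himg : ((F j).powerset.filter fun G => G.card = d ∧ τ ⊆ G)
      = (F j \ τ).image ((F j).erase ·) := by
    ext G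
    simp only [Finset.mem_filter, Finset.mem_powerset, Finset.mem_image, Finset.mem_sdiff]
    constructor
    · rintro ⟨hGF, hGc, hτG⟩
      obtain ⟨v, hvF, hvG, hveq⟩ := eq_erase (hcardF j) hGF hGc
      exact ⟨v, ⟨hvF, fun hvτ => hvG (hτG hvτ)⟩, hveq.symm⟩
    · rintro ⟨v, ⟨hvF, hvτ⟩, rfl⟩
      refine ⟨Finset.erase_subset _ _, ?_, Finset.subset_erase.mpr ⟨hτ, hvτ⟩⟩
      rw [Finset.card_erase_of_mem hvF, hcardF j]
      omega
  rw [himg, Finset.card_image_of_injOn, Finset.card_sdiff_of_subset hτ, hcardF j]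
  · omega
  · intro u hu v hv huv
    by_contra hne
    have : u ∈ (F j).erase u := by
      show u ∈ (fun x => (F j).erase x) u
      rw [huv]
      exact Finset.mem_erase.mpr ⟨hne, (Finset.mem_sdiff.mp hu).1⟩
    exact (Finset.mem_erase.mp this).1 rfl

/-- the boundary of a facet is a cycle mod 2 -/
theorem row_cyc (hcardF : ∀ j, (F j).card = d + 1) (j : Fin N) (c0 : ZMod 2)
    {τ : Finset V} (hτc : τ.card + 1 = d) :
    ∑ G ∈ RG F d, (if τ ⊆ G then (if G.card = d ∧ G ⊆ F j then c0 else 0) else 0) = 0 := by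
  have hsum : ∀ G ∈ RG F d,
      (if τ ⊆ G then (if G.card = d ∧ G ⊆ F j then c0 else 0) else 0)
      = (if G ∈ (F j).powerset.filter (fun G => G.card = d ∧ τ ⊆ G) then c0 else 0) := by
    intro G hG
    rw [mem_RG] at hG
    simp only [Finset.mem_filter, Finset.mem_powerset]
    by_cases h1 : τ ⊆ G <;> by_cases h2 : G ⊆ F j <;> simp [h1, h2, hG.2]
  rw [Finset.sum_congr rfl hsum, Finset.sum_ite_mem]
  have hsub : RG F d ∩ (F j).powerset.filter (fun G => G.card = d ∧ τ ⊆ G)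
      = (F j).powerset.filter (fun G => G.card = d ∧ τ ⊆ G) := by
    apply Finset.inter_eq_right.mpr
    intro G hG
    simp only [Finset.mem_filter, Finset.mem_powerset] at hG
    exact mem_RG.mpr ⟨⟨j, hG.1⟩, hG.2.1⟩
  rw [hsub, Finset.sum_const]
  have htwo : ∀ a : ZMod 2, a + a = 0 := by decide
  by_cases hτF : τ ⊆ F j
  · rw [pair_card hcardF j hτF hτc, two_nsmul]
    exact htwo c0
  · have : (F j).powerset.filter (fun G => G.card = d ∧ τ ⊆ G) = ∅ := by
      apply Finset.filter_false_of_mem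
      intro G hG
      rw [Finset.mem_powerset] at hG
      exact fun h => hτF (h.2.trans hG)
    rw [this, Finset.card_empty, zero_smul]



theorem keyL (hcardF : ∀ j, (F j).card = d + 1)
    (hshell : ∀ j : Fin N, 0 < (j : ℕ) → ∀ G : Finset V,
      G ⊆ F j → (∃ i, i < j ∧ G ⊆ F i) →
      ∃ G', G' ⊆ F j ∧ (∃ i, i < j ∧ G' ⊆ F i) ∧ G ⊆ G' ∧ G'.card = d) :
    ∀ k : ℕ, ∀ z : Finset V → ZMod 2,
      (∀ G, z G ≠ 0 → G.card = d ∧ SOld F k G) →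
      (∀ τ : Finset V, τ.card + 1 = d →
        ∑ G ∈ RG F d, (if τ ⊆ G then z G else 0) = 0) →
      ∃ c : Fin N → ZMod 2, (∀ i, c i ≠ 0 → (i : ℕ) < k) ∧
        ∀ G : Finset V, G.card = d → z G = ∑ i : Fin N, (if G ⊆ F i then c i else 0) := by
  have htwo : ∀ a : ZMod 2, a + a = 0 := by decide
  intro k
  induction k with
  | zero =>
    intro z hsupp _
    refine ⟨0, by simp, fun G hG => ?_⟩
    have hz : z G = 0 := by
      by_contra h
      obtain ⟨-, i, hi, -⟩ := hsupp G h
      omega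
    simp [hz]
  | succ k ih =>
    intro z hsupp hcyc
    by_cases hkN : k < N
    swap
    · have hsupp0 : ∀ G, z G ≠ 0 → G.card = d ∧ SOld F k G := by
        intro G hG
        obtain ⟨hGc, i, hi, hsub⟩ := hsupp G hG
        refine ⟨hGc, i, ?_, hsub⟩
        have := i.isLt
        omega
      obtain ⟨c, hc, hform⟩ := ih z hsupp0 hcyc
      exact ⟨c, fun i hi => Nat.lt_succ_of_lt (hc i hi), hform⟩
    · set jk : Fin N := ⟨k, hkN⟩ with hjk
      have hjkv : (jk : ℕ) = k := rfl
      by_cases hRF : SR F jk = F jk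
      · -- closing step: everything in F jk is already old
        have hsupp0 : ∀ G, z G ≠ 0 → G.card = d ∧ SOld F k G := by
          intro G hG
          obtain ⟨hGc, i, hi, hsub⟩ := hsupp G hG
          refine ⟨hGc, ?_⟩
          rcases Nat.lt_or_ge (i : ℕ) k with h | h
          · exact ⟨i, h, hsub⟩
          · have hik : i = jk := Fin.ext (by omega)
            have hsub' : G ⊆ F jk := hik ▸ hsub
            obtain ⟨v, hvF, hvG, hveq⟩ := eq_erase (hcardF jk) hsub' hGc
            have hvR : v ∈ SR F jk := hRF.symm ▸ hvF
            rw [SR, Finset.mem_filter] at hvR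
            rw [hveq]
            exact hvR.2
        obtain ⟨c, hc, hform⟩ := ih z hsupp0 hcyc
        exact ⟨c, fun i hi => Nat.lt_succ_of_lt (hc i hi), hform⟩
      · -- non-closing step
        obtain ⟨v0, hv0F, hv0R⟩ : ∃ v0 ∈ F jk, v0 ∉ SR F jk := by
          by_contra h
          push_neg at h
          exact hRF (Finset.Subset.antisymm (SR_subset F jk) h)
        set c0 := z ((F jk).erase v0) with hc0
        set z' : Finset V → ZMod 2 :=
          fun G => z G + (if G.card = d ∧ G ⊆ F jk then c0 else 0) with hz'
        have hsupp' : ∀ G, z' G ≠ 0 → G.card = d ∧ SOld F (k+1) G := by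
          intro G hG
          simp only [hz'] at hG
          by_cases h : G.card = d ∧ G ⊆ F jk
          · exact ⟨h.1, jk, by omega, h.2⟩
          · rw [if_neg h, add_zero] at hG
            obtain ⟨hGc, i, hi, hsub⟩ := hsupp G hG
            exact ⟨hGc, i, by omega, hsub⟩
        have hcyc' : ∀ τ : Finset V, τ.card + 1 = d →
            ∑ G ∈ RG F d, (if τ ⊆ G then z' G else 0) = 0 := by
          intro τ hτ
          have hsp : ∀ G ∈ RG F d, (if τ ⊆ G then z' G else 0)
              = (if τ ⊆ G then z G else 0)
                + (if τ ⊆ G then (if G.card = d ∧ G ⊆ F jk then c0 else 0) else 0) := by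
            intro G _
            by_cases h : τ ⊆ G <;> simp [hz', h]
          rw [Finset.sum_congr rfl hsp, Finset.sum_add_distrib, hcyc τ hτ,
            row_cyc hcardF jk c0 hτ, add_zero]
        have hv0z : z' ((F jk).erase v0) = 0 := by
          have hcond : ((F jk).erase v0).card = d ∧ (F jk).erase v0 ⊆ F jk := by
            constructor
            · rw [Finset.card_erase_of_mem hv0F, hcardF jk]
              omega
            · exact Finset.erase_subset _ _
          simp only [hz', if_pos hcond, ← hc0]
          exact htwo c0
        have hnew : ∀ v ∈ F jk, v ∉ SR F jk → z' ((F jk).erase v) = 0 := by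
          intro v hvF hvR
          by_cases hvv0 : v = v0
          · rw [hvv0]; exact hv0z
          · set τ : Finset V := ((F jk).erase v).erase v0 with hτ
            have hv0ev : v0 ∈ (F jk).erase v :=
              Finset.mem_erase.mpr ⟨fun h => hvv0 h.symm, hv0F⟩
            have hd1 : 1 ≤ d := by
              have h1 := Finset.card_pos.mpr ⟨v0, hv0ev⟩
              rw [Finset.card_erase_of_mem hvF, hcardF jk] at h1
              omega
            have hτc : τ.card + 1 = d := by
              rw [hτ, Finset.card_erase_of_mem hv0ev, Finset.card_erase_of_mem hvF,
                hcardF jk]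
              omega
            have hτF : τ ⊆ F jk :=
              (Finset.erase_subset _ _).trans (Finset.erase_subset _ _)
            have hRτ : SR F jk ⊆ τ := by
              rw [hτ]
              exact Finset.subset_erase.mpr
                ⟨Finset.subset_erase.mpr ⟨SR_subset F jk, hvR⟩, hv0R⟩
            have hmem : (F jk).erase v ∈ RG F d :=
              mem_RG.mpr ⟨⟨jk, Finset.erase_subset _ _⟩, by
                rw [Finset.card_erase_of_mem hvF, hcardF jk]; omega⟩
            have hside : ∀ G ∈ RG F d, G ≠ (F jk).erase v →
                (if τ ⊆ G then z' G else 0) = 0 := by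
              intro G _ hGne
              by_cases hτG : τ ⊆ G
              swap
              · rw [if_neg hτG]
              rw [if_pos hτG]
              by_contra h
              obtain ⟨hGc, i, hik1, hGi⟩ := hsupp' G h
              rcases Nat.lt_or_ge (i : ℕ) k with hik | hik
              · have hτold : SOld F (jk : ℕ) τ := ⟨i, by omega, hτG.trans hGi⟩
                exact (old_iff hcardF hshell jk hτF).mp hτold hRτ
              · have : i = jk := Fin.ext (by omega)
                subst this
                obtain ⟨w, hwF, hwG, hweq⟩ := eq_erase (hcardF jk) hGi hGc
                have hwτ : w ∉ τ := fun hw => hwG (hτG hw)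
                rw [hτ] at hwτ
                simp only [Finset.mem_erase, not_and_or, not_not] at hwτ
                rcases hwτ with hw | hw | hw
                · rw [hweq, hw] at h
                  exact h hv0z
                · exact hGne (by rw [hweq, hw])
                · exact hw hwF
            have hzero := hcyc' τ hτc
            rw [Finset.sum_eq_single_of_mem _ hmem hside] at hzero
            have hτsub : τ ⊆ (F jk).erase v := Finset.erase_subset _ _
            rwa [if_pos hτsub] at hzero
        have hsupp'' : ∀ G, z' G ≠ 0 → G.card = d ∧ SOld F k G := by
          intro G h
          obtain ⟨hGc, i, hik1, hGi⟩ := hsupp' G h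
          refine ⟨hGc, ?_⟩
          rcases Nat.lt_or_ge (i : ℕ) k with hik | hik
          · exact ⟨i, hik, hGi⟩
          · have : i = jk := Fin.ext (by omega)
            subst this
            obtain ⟨w, hwF, hwG, hweq⟩ := eq_erase (hcardF jk) hGi hGc
            by_cases hwR : w ∈ SR F jk
            · rw [SR, Finset.mem_filter] at hwR
              rw [hweq]
              exact hwR.2
            · exact absurd (hweq ▸ hnew w hwF hwR) h
        obtain ⟨c, hck, hform⟩ := ih z' hsupp'' hcyc'
        refine ⟨fun i => if i = jk then c0 else c i, ?_, ?_⟩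
        · intro i hi
          have hi' : (if i = jk then c0 else c i) ≠ 0 := hi
          by_cases hij : i = jk
          · rw [hij, hjkv]; omega
          · rw [if_neg hij] at hi'
            exact Nat.lt_succ_of_lt (hck i hi')
        · intro G hGc
          have hcjk : c jk = 0 := by
            by_contra h
            have := hck jk h
            omega
          have hsplit : ∀ i : Fin N, (if G ⊆ F i then (if i = jk then c0 else c i) else 0)
              = (if G ⊆ F i then c i else 0)
                + (if i = jk then (if G ⊆ F jk then c0 else 0) else 0) := by
            intro i
            by_cases hij : i = jk
            · rw [hij]
              by_cases hGF : G ⊆ F jk <;> simp [hGF, hcjk]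
            · by_cases hGF : G ⊆ F i <;> simp [hGF, hij]
          rw [Finset.sum_congr rfl (fun i _ => hsplit i), Finset.sum_add_distrib,
            Finset.sum_ite_eq' Finset.univ jk (fun _ => if G ⊆ F jk then c0 else 0),
            if_pos (Finset.mem_univ jk), ← hform G hGc]
          simp only [hz', hGc, true_and]
          rw [add_assoc, htwo, add_zero]

theorem noClosing (hN : 0 < N) (hcardF : ∀ j, (F j).card = d + 1)
    (hshell : ∀ j : Fin N, 0 < (j : ℕ) → ∀ G : Finset V,
      G ⊆ F j → (∃ i, i < j ∧ G ⊆ F i) →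
      ∃ G', G' ⊆ F j ∧ (∃ i, i < j ∧ G' ⊆ F i) ∧ G ⊆ G' ∧ G'.card = d)
    (hle2' : ∀ G : Finset V, G.card = d →
      (Finset.univ.filter fun i : Fin N => G ⊆ F i).card ≤ 2)
    (hone' : ∃ G : Finset V, G.card = d ∧
      (Finset.univ.filter fun i : Fin N => G ⊆ F i).card = 1) :
    ∀ j : Fin N, SR F j ≠ F j := by
  intro j hclose
  have htwo : ∀ a : ZMod 2, a + a = 0 := by decide
  have hcancel : ∀ x y : ZMod 2, x + y = 0 → y = x := by decide
  set z : Finset V → ZMod 2 := fun G => if G.card = d ∧ G ⊆ F j then 1 else 0 with hz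
  have hsupp : ∀ G, z G ≠ 0 → G.card = d ∧ SOld F (j : ℕ) G := by
    intro G hG
    simp only [hz] at hG
    by_cases h : G.card = d ∧ G ⊆ F j
    · obtain ⟨v, hvF, -, hveq⟩ := eq_erase (hcardF j) h.2 h.1
      have hvR : v ∈ SR F j := hclose.symm ▸ hvF
      rw [SR, Finset.mem_filter] at hvR
      exact ⟨h.1, hveq ▸ hvR.2⟩
    · rw [if_neg h] at hG
      exact absurd rfl hG
  have hcyc : ∀ τ : Finset V, τ.card + 1 = d →
      ∑ G ∈ RG F d, (if τ ⊆ G then z G else 0) = 0 := by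
    intro τ hτ
    simpa only [hz] using row_cyc (F := F) hcardF j (1 : ZMod 2) hτ
  obtain ⟨c, hck, hform⟩ := keyL hcardF hshell (j : ℕ) z hsupp hcyc
  set t : Fin N → ZMod 2 := fun i => c i + (if i = j then 1 else 0) with ht
  have hdep : ∀ G : Finset V, G.card = d →
      ∑ i : Fin N, (if G ⊆ F i then t i else 0) = 0 := by
    intro G hGc
    have hsplit : ∀ i : Fin N, (if G ⊆ F i then t i else 0)
        = (if G ⊆ F i then c i else 0)
          + (if i = j then (if G ⊆ F j then (1 : ZMod 2) else 0) else 0) := by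
      intro i
      by_cases hij : i = j
      · rw [hij]
        by_cases hGF : G ⊆ F j <;> simp [ht, hGF]
      · by_cases hGF : G ⊆ F i <;> simp [ht, hGF, hij]
    rw [Finset.sum_congr rfl fun i _ => hsplit i, Finset.sum_add_distrib,
      Finset.sum_ite_eq' Finset.univ j (fun _ => if G ⊆ F j then (1 : ZMod 2) else 0),
      if_pos (Finset.mem_univ j), ← hform G hGc]
    simp only [hz, hGc, true_and]
    exact htwo _
  have hconst : ∀ i : Fin N, t i = t ⟨0, hN⟩ := by
    have H : ∀ n : ℕ, ∀ hn : n < N, t ⟨n, hn⟩ = t ⟨0, hN⟩ := by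
      intro n
      induction n using Nat.strong_induction_on with
      | _ n IH =>
        intro hn
        rcases Nat.eq_zero_or_pos n with h0 | h0
        · subst h0; rfl
        · set i : Fin N := ⟨n, hn⟩ with hi
          obtain ⟨G', hG'F, ⟨a, ha, hG'a⟩, -, hG'c⟩ :=
            hshell i h0 ∅ (Finset.empty_subset _)
              ⟨⟨0, hN⟩, h0, Finset.empty_subset _⟩
          have hai : a ≠ i := by
            intro h
            rw [h] at ha
            exact lt_irrefl _ ha
          have hS : Finset.univ.filter (fun i' : Fin N => G' ⊆ F i') = {a, i} := by
            refine (Finset.eq_of_subset_of_card_le ?_ ?_).symm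
            · intro x hx
              rcases Finset.mem_insert.mp hx with h | h
              · rw [h]
                exact Finset.mem_filter.mpr ⟨Finset.mem_univ _, hG'a⟩
              · rw [Finset.mem_singleton.mp h]
                exact Finset.mem_filter.mpr ⟨Finset.mem_univ _, hG'F⟩
            · rw [Finset.card_insert_of_notMem (by simpa using hai),
                Finset.card_singleton]
              exact hle2' G' hG'c
          have h0dep := hdep G' hG'c
          rw [← Finset.sum_filter, hS, Finset.sum_pair hai] at h0dep
          have hta : t i = t a := hcancel _ _ h0dep
          have haN : (a : ℕ) < n := ha
          rw [hta]
          exact IH a.val haN a.isLt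
    exact fun i => H i.val i.isLt
  have hcj : c j = 0 := by
    by_contra h
    exact absurd (hck j h) (lt_irrefl _)
  have htj : t j = 1 := by simp [ht, hcj]
  obtain ⟨G0, hG0c, hG0one⟩ := hone'
  obtain ⟨k0, hk0⟩ := Finset.card_eq_one.mp hG0one
  have hd := hdep G0 hG0c
  rw [← Finset.sum_filter, hk0, Finset.sum_singleton] at hd
  have hkj : t k0 = t j := (hconst k0).trans (hconst j).symm
  rw [hkj, htj] at hd
  exact one_ne_zero hd

theorem interval_sum {R S : Finset V} (hRS : R ⊆ S) (hne : R ≠ S) :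
    ∑ σ ∈ S.powerset.filter (fun σ => R ⊆ σ), (-1 : ℤ) ^ (σ.card + 1) = 0 := by
  have hinj : ∀ τ₁ ∈ (S \ R).powerset, ∀ τ₂ ∈ (S \ R).powerset,
      R ∪ τ₁ = R ∪ τ₂ → τ₁ = τ₂ := by
    intro τ₁ h₁ τ₂ h₂ h
    rw [Finset.mem_powerset] at h₁ h₂
    have hd₁ : Disjoint R τ₁ := (Finset.sdiff_disjoint.mono_left h₁).symm
    have hd₂ : Disjoint R τ₂ := (Finset.sdiff_disjoint.mono_left h₂).symm
    have := congrArg (fun s => s \ R) h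
    simpa [Finset.union_sdiff_cancel_left hd₁, Finset.union_sdiff_cancel_left hd₂]
      using this
  have himg : S.powerset.filter (fun σ => R ⊆ σ)
      = (S \ R).powerset.image (fun τ => R ∪ τ) := by
    ext σ
    simp only [Finset.mem_filter, Finset.mem_powerset, Finset.mem_image]
    constructor
    · rintro ⟨hσS, hRσ⟩
      exact ⟨σ \ R, Finset.sdiff_subset_sdiff hσS Finset.Subset.rfl,
        Finset.union_sdiff_of_subset hRσ⟩
    · rintro ⟨τ, hτ, rfl⟩
      exact ⟨Finset.union_subset hRS (hτ.trans (Finset.sdiff_subset)),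
        Finset.subset_union_left⟩
  rw [himg, Finset.sum_image hinj]
  have hcard : ∀ τ ∈ (S \ R).powerset, (-1 : ℤ) ^ ((R ∪ τ).card + 1)
      = (-1 : ℤ) ^ (R.card + 1) * (-1 : ℤ) ^ τ.card := by
    intro τ hτ
    rw [Finset.mem_powerset] at hτ
    have hd : Disjoint R τ := (Finset.sdiff_disjoint.mono_left hτ).symm
    rw [Finset.card_union_of_disjoint hd, ← pow_add]
    ring_nf
  rw [Finset.sum_congr rfl hcard, ← Finset.mul_sum,
    Finset.sum_powerset_neg_one_pow_card_of_nonempty, mul_zero]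
  rw [Finset.sdiff_nonempty]
  exact fun h => hne (Finset.Subset.antisymm hRS h)

end Stmt18Aux

open Stmt18Aux in
/-- A pure d-dimensional shellable simplicial complex in which every (d-1)-face lies in
at most two facets and some (d-1)-face lies in exactly one facet has reduced Euler
characteristic 0 (it is a ball, hence has the homology of a point). -/
theorem stmt18 {V : Type*} [DecidableEq V]
    (Δ : Finset (Finset V)) (d : ℕ)
    (hne : Δ.Nonempty)
    (hdown : ∀ σ ∈ Δ, ∀ τ, τ ⊆ σ → τ ∈ Δ)
    (hpure : ∀ σ ∈ Δ, ∃ F ∈ Δ, σ ⊆ F ∧ F.card = d + 1)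
    (N : ℕ) (F : Fin N → Finset V)
    (hF : ∀ j, F j ∈ Δ ∧ (F j).card = d + 1)
    (hFinj : Function.Injective F)
    (hFall : ∀ σ ∈ Δ, σ.card = d + 1 → ∃ j, F j = σ)
    (hshell : ∀ j : Fin N, 0 < (j : ℕ) → ∀ G : Finset V,
      G ⊆ F j → (∃ i, i < j ∧ G ⊆ F i) →
      ∃ G', G' ⊆ F j ∧ (∃ i, i < j ∧ G' ⊆ F i) ∧ G ⊆ G' ∧ G'.card = d)
    (hle2 : ∀ G ∈ Δ, G.card = d →
      (Finset.univ.filter fun j : Fin N => G ⊆ F j).card ≤ 2)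
    (hone : ∃ G ∈ Δ, G.card = d ∧
      (Finset.univ.filter fun j : Fin N => G ⊆ F j).card = 1) :
    (∑ σ ∈ Δ, (-1 : ℤ) ^ (σ.card + 1)) = 0 := by
  classical
  have hcardF : ∀ j, (F j).card = d + 1 := fun j => (hF j).2
  obtain ⟨σ0, hσ0⟩ := hne
  obtain ⟨F0, hF0Δ, -, hF0c⟩ := hpure σ0 hσ0
  obtain ⟨j0, -⟩ := hFall F0 hF0Δ hF0c
  have hN : 0 < N := j0.pos
  have hle2' : ∀ G : Finset V, G.card = d →
      (Finset.univ.filter fun i : Fin N => G ⊆ F i).card ≤ 2 := by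
    intro G hGc
    by_cases hne2 : (Finset.univ.filter fun i : Fin N => G ⊆ F i).Nonempty
    · obtain ⟨i, hi⟩ := hne2
      have hGi : G ⊆ F i := (Finset.mem_filter.mp hi).2
      exact hle2 G (hdown (F i) (hF i).1 G hGi) hGc
    · rw [Finset.not_nonempty_iff_eq_empty] at hne2
      rw [hne2]
      simp
  have hone' : ∃ G : Finset V, G.card = d ∧
      (Finset.univ.filter fun i : Fin N => G ⊆ F i).card = 1 := by
    obtain ⟨G, -, hGc, h1⟩ := hone
    exact ⟨G, hGc, h1⟩
  have hnc := noClosing hN hcardF hshell hle2' hone'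
  have hpart : Δ = Finset.univ.biUnion
      (fun j : Fin N => (F j).powerset.filter fun σ => SR F j ⊆ σ) := by
    ext σ
    simp only [Finset.mem_biUnion, Finset.mem_univ, true_and, Finset.mem_filter,
      Finset.mem_powerset]
    constructor
    · intro hσ
      obtain ⟨Ff, hFfΔ, hσFf, hFfc⟩ := hpure σ hσ
      obtain ⟨j1, hj1⟩ := hFall Ff hFfΔ hFfc
      set A := Finset.univ.filter (fun i : Fin N => σ ⊆ F i) with hA
      have hAne : A.Nonempty :=
        ⟨j1, Finset.mem_filter.mpr ⟨Finset.mem_univ _, hj1 ▸ hσFf⟩⟩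
      set jm := A.min' hAne with hjmd
      have hjm : σ ⊆ F jm := (Finset.mem_filter.mp (A.min'_mem hAne)).2
      refine ⟨jm, hjm, ?_⟩
      by_contra hnR
      have hold : SOld F (jm : ℕ) σ := (old_iff hcardF hshell jm hjm).mpr hnR
      obtain ⟨i, hi, hσi⟩ := hold
      have hle : jm ≤ i := A.min'_le i (Finset.mem_filter.mpr ⟨Finset.mem_univ _, hσi⟩)
      have hle2 : (jm : ℕ) ≤ (i : ℕ) := hle
      omega
    · rintro ⟨j, hσF, -⟩
      exact hdown (F j) (hF j).1 σ hσF
  have hdisj : ((Finset.univ : Finset (Fin N)) : Set (Fin N)).PairwiseDisjoint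
      (fun j : Fin N => (F j).powerset.filter fun σ => SR F j ⊆ σ) := by
    intro a _ b _ hab
    have key : ∀ a b : Fin N, (a : ℕ) < (b : ℕ) → ∀ σ,
        σ ∈ (F a).powerset.filter (fun σ => SR F a ⊆ σ) →
        σ ∈ (F b).powerset.filter (fun σ => SR F b ⊆ σ) → False := by
      intro a b hab σ hσa hσb
      rw [Finset.mem_filter, Finset.mem_powerset] at hσa hσb
      exact (old_iff hcardF hshell b hσb.1).mp ⟨a, hab, hσa.1⟩ hσb.2
    refine Finset.disjoint_left.mpr fun σ hσa hσb => ?_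
    rcases Nat.lt_or_ge (a : ℕ) (b : ℕ) with h | h
    · exact absurd hσb (fun hb => key a b h σ hσa hb)
    · have h' : (b : ℕ) < (a : ℕ) := by
        rcases Nat.lt_or_ge (b : ℕ) (a : ℕ) with h' | h'
        · exact h'
        · exact absurd (Fin.ext (le_antisymm h h')).symm hab
      exact absurd hσa (fun ha => key b a h' σ hσb ha)
  rw [hpart, Finset.sum_biUnion hdisj]
  exact Finset.sum_eq_zero fun j _ => interval_sum (SR_subset F j) (hnc j)
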